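/- ℂⁿ with n ≥ 2 is not of E-limit type for any Hermitian metric E on ℂⁿ. -/

import Mathlib

open Filter Topology

/-- A Hermitian metric on a space with trivialized tangent bundle, recorded through its
length function on tangent vectors: a norm on the (complex) tangent space at each point. -/
structure HermMetric (P V : Type*) [NormedAddCommGroup V] [NormedSpace ℂ V] where
  len : P → V → ℝ
  len_nonneg : ∀ p v, 0 ≤ len p v
  len_pos : ∀ p v, v ≠ 0 → 0 < len p v
  len_smul : ∀ (p : P) (a : ℂ) (v : V), len p (a • v) = ‖a‖ * len p (v)
  len_add_le : ∀ p u v, len p (u + v) ≤ len p u + len p v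

variable {Y : Type*} [NormedAddCommGroup Y] [NormedSpace ℂ Y]

/-- A sequence of maps on a domain `Δ` is compactly divergent if it eventually leaves
every compact subset of the target along every compact subset of `Δ`. -/
def CompactlyDivergent (u : ℕ → ℂ → Y) (Δ : Set ℂ) : Prop :=
  ∀ K : Set ℂ, K ⊆ Δ → IsCompact K → ∀ L : Set Y, IsCompact L →
    ∃ j₀, ∀ j ≥ j₀, ∀ z ∈ K, u j z ∉ L

/-- A family of maps on `Δ` is normal if every sequence in it has a subsequence converging
uniformly on compact subsets of `Δ`. -/
def IsNormalFamily (𝓕 : Set (ℂ → Y)) (Δ : Set ℂ) : Prop :=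
  ∀ u : ℕ → ℂ → Y, (∀ j, u j ∈ 𝓕) →
    ∃ (φ : ℕ → ℕ) (g : ℂ → Y), StrictMono φ ∧
      TendstoLocallyUniformlyOn (fun j => u (φ j)) g atTop Δ

/-- `Y` is of `E`-limit type if for every non-normal family of holomorphic maps from a
domain `Δ ⊆ ℂ` into `Y` containing no compactly divergent sequence, a Brody-type
rescaling `ξ ↦ f j (p j + ρ j ξ)` converges locally uniformly on `ℂ` to a non-constant
`E`-Brody curve. -/
def IsELimitType (E : HermMetric Y Y) : Prop :=
  ∀ Δ : Set ℂ, IsOpen Δ → IsConnected Δ →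
    ∀ 𝓕 : Set (ℂ → Y), (∀ f ∈ 𝓕, DifferentiableOn ℂ f Δ) →
      ¬IsNormalFamily 𝓕 Δ →
      (∀ u : ℕ → ℂ → Y, (∀ j, u j ∈ 𝓕) → ¬CompactlyDivergent u Δ) →
      ∃ (p : ℕ → ℂ) (p₀ : ℂ) (fs : ℕ → ℂ → Y) (ρ : ℕ → ℝ) (g : ℂ → Y),
        (∀ j, p j ∈ Δ) ∧ p₀ ∈ Δ ∧ Tendsto p atTop (𝓝 p₀) ∧
        (∀ j, fs j ∈ 𝓕) ∧ (∀ j, 0 < ρ j) ∧ Tendsto ρ atTop (𝓝 0) ∧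
        TendstoLocallyUniformly (fun (j : ℕ) (ξ : ℂ) => fs j (p j + (ρ j : ℂ) * ξ))
          g atTop ∧
        Differentiable ℂ g ∧ ¬(∃ y, ∀ ξ, g ξ = y) ∧
        ∃ c : ℝ, ∀ ξ, E.len (g ξ) (deriv g ξ) ≤ c

set_option maxHeartbeats 1000000

lemma summable_pow_div (R : ℝ) (hR : 0 ≤ R) (e : ℕ → ℕ) (he : ∀ k, k + 1 ≤ e k) :
    Summable (fun k : ℕ => (R / ((k : ℝ) + 1)) ^ e k) := by
  obtain ⟨N, hN⟩ := exists_nat_ge (2 * R)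
  rw [← summable_nat_add_iff N]
  apply Summable.of_nonneg_of_le
      (fun k => pow_nonneg (div_nonneg hR (by positivity)) _) (fun k => ?_)
      (summable_geometric_of_lt_one (by norm_num) (by norm_num : (1/2:ℝ) < 1))
  have hb0 : (0:ℝ) < (↑(k + N) : ℝ) + 1 := by positivity
  have hbase : R / ((↑(k + N) : ℝ) + 1) ≤ 1 / 2 := by
    rw [div_le_div_iff₀ hb0 (by norm_num)]
    have : (N : ℝ) ≤ (↑(k + N) : ℝ) + 1 := by push_cast; linarith [Nat.cast_nonneg (α := ℝ) k]
    nlinarith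
  calc (R / ((↑(k + N):ℝ) + 1)) ^ e (k + N)
      ≤ (1/2:ℝ) ^ e (k + N) := by
        exact pow_le_pow_left₀ (div_nonneg hR hb0.le) hbase _
    _ ≤ (1/2:ℝ) ^ k := by
        apply pow_le_pow_of_le_one (by norm_num) (by norm_num)
        exact le_trans (by omega) (he (k + N))

lemma exists_entire_large (t : ℕ → ℝ) :
    ∃ G : ℂ → ℂ, Differentiable ℂ G ∧
      ∀ m : ℕ, 2 ≤ m → ∃ r : ℝ, G (m : ℂ) = (r : ℂ) ∧ t m ≤ r := by
  have hsel : ∀ k : ℕ, ∃ e : ℕ, k + 1 ≤ e ∧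
      max (t (k + 2)) 0 ≤ (((k:ℝ) + 2) / ((k:ℝ) + 1)) ^ e := by
    intro k
    have hgt : (1:ℝ) < ((k:ℝ) + 2) / ((k:ℝ) + 1) := by
      rw [lt_div_iff₀ (by positivity)]; linarith
    obtain ⟨n, hn⟩ := pow_unbounded_of_one_lt (max (t (k + 2)) 0) hgt
    refine ⟨max (k + 1) n, le_max_left _ _, hn.le.trans ?_⟩
    exact pow_le_pow_right₀ hgt.le (le_max_right _ _)
  choose e he1 he2 using hsel
  set f : ℕ → ℂ → ℂ := fun k z => (z / ((k : ℂ) + 1)) ^ e k with hf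
  have hnorm : ∀ (k : ℕ) (z : ℂ), ‖f k z‖ = (‖z‖ / ((k:ℝ) + 1)) ^ e k := by
    intro k z
    have h1 : ((k : ℂ) + 1) = ((k + 1 : ℕ) : ℂ) := by push_cast; ring
    rw [hf]; simp only [norm_pow, norm_div, h1, Complex.norm_natCast]
    push_cast; ring
  have hdiffsum : ∀ N : ℕ, Differentiable ℂ (fun z => ∑ k ∈ Finset.range N, f k z) := by
    intro N
    apply Differentiable.fun_sum
    intro k _
    exact (differentiable_id.div_const _).pow _
  have hdiff : Differentiable ℂ (fun z => ∑' k, f k z) := by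
    intro z₀
    set R : ℝ := ‖z₀‖ + 1 with hRdef
    have hR : 0 ≤ R := by positivity
    have hs : Summable (fun k : ℕ => (R / ((k:ℝ) + 1)) ^ e k) := summable_pow_div R hR e he1
    have htu : TendstoUniformlyOn (fun (N : ℕ) z => ∑ k ∈ Finset.range N, f k z)
        (fun z => ∑' k, f k z) atTop (Metric.ball 0 R) := by
      apply tendstoUniformlyOn_tsum_nat hs
      intro k z hz
      rw [hnorm]
      have hzR : ‖z‖ ≤ R := (mem_ball_zero_iff.mp hz).le
      gcongr
    have hd : DifferentiableOn ℂ (fun z => ∑' k, f k z) (Metric.ball 0 R) := by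
      apply htu.tendstoLocallyUniformlyOn.differentiableOn ?_ Metric.isOpen_ball
      exact Eventually.of_forall (fun N => (hdiffsum N).differentiableOn)
    have hmem : z₀ ∈ Metric.ball (0:ℂ) R := by
      rw [mem_ball_zero_iff]; simp [hRdef]
    exact (hd.differentiableAt (Metric.isOpen_ball.mem_nhds hmem))
  refine ⟨fun z => ∑' k, f k z, hdiff, ?_⟩
  intro m hm
  obtain ⟨l, rfl⟩ : ∃ l, m = l + 2 := ⟨m - 2, by omega⟩
  set F : ℕ → ℝ := fun k => (((l:ℝ) + 2) / ((k:ℝ) + 1)) ^ e k with hFdef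
  have hFs : Summable F := by
    have := summable_pow_div ((l:ℝ) + 2) (by positivity) e he1
    exact this
  have hF0 : ∀ k, 0 ≤ F k := fun k => pow_nonneg (by positivity) _
  refine ⟨∑' k, F k, ?_, ?_⟩
  · have hterm : ∀ k, f k ((l + 2 : ℕ) : ℂ) = ((F k : ℝ) : ℂ) := by
      intro k
      rw [hf, hFdef]
      push_cast
      ring
    calc (fun z => ∑' k, f k z) ((l + 2 : ℕ) : ℂ) = ∑' k, ((F k : ℝ) : ℂ) := by
          exact tsum_congr hterm
      _ = ((∑' k, F k : ℝ) : ℂ) := (Complex.ofRealCLM.map_tsum hFs).symm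
  · calc t (l + 2) ≤ max (t (l + 2)) 0 := le_max_left _ _
      _ ≤ (((l:ℝ) + 2) / ((l:ℝ) + 1)) ^ e l := he2 l
      _ = F l := rfl
      _ ≤ ∑' k, F k := Summable.le_tsum hFs l (fun k _ => hF0 k)

/-- `ℂⁿ` with `n ≥ 2` is not of `E`-limit type for any Hermitian metric
`E` on `ℂⁿ`. -/
theorem Cn_not_E_limit_type (n : ℕ) (hn : 2 ≤ n)
    (E : HermMetric (EuclideanSpace ℂ (Fin n)) (EuclideanSpace ℂ (Fin n))) :
    ¬IsELimitType E := by
  intro hE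
  set i₀ : Fin n := ⟨0, by omega⟩ with hi₀
  set i₁ : Fin n := ⟨1, by omega⟩ with hi₁
  have hne : i₀ ≠ i₁ := by simp [hi₀, hi₁, Fin.ext_iff]
  set E₁ : EuclideanSpace ℂ (Fin n) := EuclideanSpace.single i₀ 1 with hE₁
  set E₂ : EuclideanSpace ℂ (Fin n) := EuclideanSpace.single i₁ 1 with hE₂
  have hE₂ne : E₂ ≠ 0 := by
    intro h
    have h2 : E₂ i₁ = (0 : EuclideanSpace ℂ (Fin n)) i₁ := by rw [h]
    rw [hE₂] at h2
    simp [EuclideanSpace.single_apply] at h2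
  set P : ℕ → EuclideanSpace ℂ (Fin n) := fun m => (m : ℂ) • E₁ with hP
  set A : ℕ → ℝ := fun m => E.len (P m) E₁ with hA
  set B : ℕ → ℝ := fun m => E.len (P m) E₂ with hB
  have hA0 : ∀ m, 0 ≤ A m := fun m => E.len_nonneg _ _
  have hBpos : ∀ m, 0 < B m := fun m => E.len_pos _ _ hE₂ne
  set t : ℕ → ℝ := fun m => (((m : ℝ) + A m) / B m) / Real.pi with ht
  obtain ⟨G, hGdiff, hGval⟩ := exists_entire_large t
  set h₀ : ℂ → ℂ := fun z => Complex.sin ((Real.pi : ℂ) * z) * G z with hh₀def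
  have hh₀ : Differentiable ℂ h₀ := by
    exact (Complex.differentiable_sin.comp (differentiable_id.const_mul _)).mul hGdiff
  set Φ : ℂ → EuclideanSpace ℂ (Fin n) := fun w => w • E₁ + h₀ w • E₂ with hΦdef
  have hΦdiff : Differentiable ℂ Φ :=
    (differentiable_id.smul_const E₁).add (hh₀.smul_const E₂)
  have hΦapp : ∀ w, Φ w i₀ = w := by
    intro w
    rw [hΦdef]
    simp only [PiLp.add_apply, PiLp.smul_apply, hE₁, hE₂, EuclideanSpace.single_apply]
    simp [hne]
  have happ_cont : Continuous (fun x : EuclideanSpace ℂ (Fin n) => x i₀) :=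
    (continuous_apply i₀).comp (PiLp.continuous_ofLp 2 _)
  set 𝓕 : Set (ℂ → EuclideanSpace ℂ (Fin n)) :=
    Set.range (fun k : ℕ => fun z => Φ ((k : ℂ) * z)) with h𝓕
  have hdiff𝓕 : ∀ f ∈ 𝓕, DifferentiableOn ℂ f Set.univ := by
    rintro f ⟨k, rfl⟩
    exact (hΦdiff.comp (differentiable_id.const_mul _)).differentiableOn
  have hnotnorm : ¬IsNormalFamily 𝓕 Set.univ := by
    intro hN
    obtain ⟨φ, gl, hφ, hconv⟩ := hN (fun j => fun z => Φ ((j : ℂ) * z)) (fun j => ⟨j, rfl⟩)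
    have hpt : Tendsto (fun j => Φ ((φ j : ℂ) * Complex.I)) atTop (𝓝 (gl Complex.I)) :=
      hconv.tendsto_at (Set.mem_univ _)
    have h1 : Tendsto (fun j => ((φ j : ℂ) * Complex.I)) atTop (𝓝 (gl Complex.I i₀)) :=
      ((happ_cont.tendsto _).comp hpt).congr (fun j => hΦapp _)
    have h2 : Tendsto (fun j => ‖(φ j : ℂ) * Complex.I‖) atTop (𝓝 ‖gl Complex.I i₀‖) :=
      h1.norm
    have h3 : Tendsto (fun j => ‖(φ j : ℂ) * Complex.I‖) atTop atTop := by
      have h4 : Tendsto (fun j => ((φ j : ℕ) : ℝ)) atTop atTop :=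
        tendsto_natCast_atTop_atTop.comp hφ.tendsto_atTop
      apply h4.congr
      intro j
      simp [Complex.norm_natCast]
    exact (not_tendsto_atTop_of_tendsto_nhds h2) h3
  have hnodiv : ∀ u : ℕ → ℂ → EuclideanSpace ℂ (Fin n), (∀ j, u j ∈ 𝓕) →
      ¬CompactlyDivergent u Set.univ := by
    intro u hu hcd
    obtain ⟨j₀, hj₀⟩ := hcd {0} (Set.subset_univ _) isCompact_singleton {Φ 0} isCompact_singleton
    obtain ⟨k, hk⟩ := hu j₀
    apply hj₀ j₀ le_rfl 0 rfl
    rw [← hk]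
    simp
  obtain ⟨p, p₀, fs, ρ, g, hpΔ, hp₀, hptend, hfs, hρpos, hρ0, htlu, hgdiff, hgnc, C, hC⟩ :=
    hE Set.univ isOpen_univ ⟨⟨0, trivial⟩, (convex_univ (𝕜 := ℝ)).isPreconnected⟩
      𝓕 hdiff𝓕 hnotnorm hnodiv
  choose k hk using hfs
  set a : ℕ → ℂ := fun j => (k j : ℂ) * p j with ha
  set r : ℕ → ℝ := fun j => (k j : ℝ) * ρ j with hr
  have hpt : ∀ ξ, Tendsto (fun j => Φ (a j + (r j : ℂ) * ξ)) atTop (𝓝 (g ξ)) := by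
    intro ξ
    have h1 := (tendstoLocallyUniformlyOn_univ.mpr htlu).tendsto_at (Set.mem_univ ξ)
    apply h1.congr
    intro j
    rw [← hk j]
    show Φ ((k j : ℂ) * (p j + (ρ j : ℂ) * ξ)) = Φ (a j + (r j : ℂ) * ξ)
    congr 1
    rw [ha, hr]
    push_cast
    ring
  have happt : ∀ ξ, Tendsto (fun j => a j + (r j : ℂ) * ξ) atTop (𝓝 (g ξ i₀)) := by
    intro ξ
    exact ((happ_cont.tendsto _).comp (hpt ξ)).congr (fun j => hΦapp _)
  have hca : Tendsto a atTop (𝓝 (g 0 i₀)) := by simpa using happt 0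
  have hrc : Tendsto (fun j => (r j : ℂ)) atTop (𝓝 (g 1 i₀ - g 0 i₀)) := by
    have h1 := (happt 1).sub hca
    apply h1.congr
    intro j
    ring
  set b : ℝ := (g 1 i₀ - g 0 i₀).re with hbdef
  have him : (g 1 i₀ - g 0 i₀).im = 0 := by
    have h1 : Tendsto (fun _ : ℕ => (0 : ℝ)) atTop (𝓝 ((g 1 i₀ - g 0 i₀).im)) := by
      have h2 := (Complex.continuous_im.tendsto _).comp hrc
      apply Tendsto.congr _ h2
      intro j
      simp
    exact tendsto_nhds_unique h1 tendsto_const_nhds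
  have hdb : g 1 i₀ - g 0 i₀ = (b : ℂ) := by
    apply Complex.ext
    · simp [hbdef]
    · simp [him]
  have hrb : Tendsto r atTop (𝓝 b) := by
    have h1 := (Complex.continuous_re.tendsto _).comp hrc
    apply Tendsto.congr _ h1
    intro j
    simp
  have hb0 : 0 ≤ b := by
    apply ge_of_tendsto hrb
    exact Eventually.of_forall (fun j => mul_nonneg (Nat.cast_nonneg _) (hρpos j).le)
  set c : ℂ := g 0 i₀ with hcdef
  have hg : ∀ ξ, g ξ = Φ (c + (b : ℂ) * ξ) := by
    intro ξ
    refine tendsto_nhds_unique (hpt ξ) ?_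
    have hl : Tendsto (fun j => a j + (r j : ℂ) * ξ) atTop (𝓝 (c + (b : ℂ) * ξ)) := by
      exact hca.add ((hdb ▸ hrc).mul_const ξ)
    exact (hΦdiff.continuous.tendsto _).comp hl
  have hbne : b ≠ 0 := by
    intro h
    apply hgnc
    refine ⟨Φ c, fun ξ => ?_⟩
    rw [hg ξ, h]
    norm_num
  have hbpos : 0 < b := lt_of_le_of_ne hb0 (Ne.symm hbne)
  have hgfun : g = fun ξ => (c + (b : ℂ) * ξ) • E₁ + h₀ (c + (b : ℂ) * ξ) • E₂ := by
    funext ξ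
    rw [hg ξ, hΦdef]
  have hderiv : ∀ ξ, deriv g ξ =
      (b : ℂ) • E₁ + (deriv h₀ (c + (b : ℂ) * ξ) * (b : ℂ)) • E₂ := by
    intro ξ
    have h1 : HasDerivAt (fun ξ : ℂ => c + (b : ℂ) * ξ) ((b : ℂ)) ξ := by
      simpa using ((hasDerivAt_id ξ).const_mul ((b : ℝ) : ℂ)).const_add c
    have h2 : HasDerivAt (fun ξ : ℂ => (c + (b : ℂ) * ξ) • E₁) ((b : ℂ) • E₁) ξ :=
      h1.smul_const E₁
    have h3 : HasDerivAt (fun ξ : ℂ => h₀ (c + (b : ℂ) * ξ))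
        (deriv h₀ (c + (b : ℂ) * ξ) * (b : ℂ)) ξ :=
      (hh₀ _).hasDerivAt.comp ξ h1
    have h4 := h3.smul_const E₂
    rw [hgfun]
    exact (h2.add h4).deriv
  have hsin0 : ∀ m : ℕ, Complex.sin ((Real.pi : ℂ) * m) = 0 := by
    intro m
    have h1 : ((Real.pi : ℂ) * m) = ((m * Real.pi : ℝ) : ℂ) := by push_cast; ring
    rw [h1, ← Complex.ofReal_sin, Real.sin_nat_mul_pi]
    simp
  have habs : ∀ m : ℕ, |Real.cos (Real.pi * m)| = 1 := by
    intro m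
    induction m with
    | zero => simp
    | succ l ih =>
      have h2 : Real.pi * ((l + 1 : ℕ) : ℝ) = Real.pi * l + Real.pi := by push_cast; ring
      rw [h2, Real.cos_add_pi, abs_neg]
      exact ih
  have hcos1 : ∀ m : ℕ, ‖Complex.cos ((Real.pi : ℂ) * m)‖ = 1 := by
    intro m
    have h1 : ((Real.pi : ℂ) * m) = ((Real.pi * m : ℝ) : ℂ) := by push_cast; ring
    rw [h1, ← Complex.ofReal_cos, Complex.norm_real, Real.norm_eq_abs]
    exact habs m
  have hh₀der : ∀ m : ℕ,
      deriv h₀ (m : ℂ) = (Real.pi : ℂ) * Complex.cos ((Real.pi : ℂ) * m) * G m := by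
    intro m
    have hs : HasDerivAt (fun z : ℂ => Complex.sin ((Real.pi : ℂ) * z))
        (Complex.cos ((Real.pi : ℂ) * m) * (Real.pi : ℂ)) (m : ℂ) := by
      have h5 : HasDerivAt (fun z : ℂ => (Real.pi : ℂ) * z) ((Real.pi : ℂ)) (m : ℂ) := by
        simpa using (hasDerivAt_id ((m : ℕ) : ℂ)).const_mul ((Real.pi : ℝ) : ℂ)
      exact (Complex.hasDerivAt_sin _).comp _ h5
    have hGd : HasDerivAt G (deriv G (m : ℂ)) (m : ℂ) := (hGdiff _).hasDerivAt
    have hmul := hs.mul hGd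
    rw [hh₀def]
    rw [show (fun z : ℂ => Complex.sin ((Real.pi : ℂ) * z) * G z) = (fun z : ℂ => Complex.sin ((Real.pi : ℂ) * z)) * G from rfl, hmul.deriv]
    rw [hsin0 m]
    ring
  obtain ⟨m', hm'⟩ := exists_nat_gt (C / b)
  set m : ℕ := m' + 2 with hm
  have hm2 : 2 ≤ m := by omega
  have hmC : C < b * m := by
    have h1 : C / b < (m : ℝ) := by
      refine lt_of_lt_of_le hm' ?_
      exact_mod_cast Nat.le_add_right m' 2
    calc C = (C / b) * b := by field_simp
      _ < (m : ℝ) * b := by exact mul_lt_mul_of_pos_right h1 hbpos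
      _ = b * m := mul_comm _ _
  have hbcne : ((b : ℝ) : ℂ) ≠ 0 := Complex.ofReal_ne_zero.mpr hbne
  set ξm : ℂ := ((m : ℂ) - c) / ((b : ℝ) : ℂ) with hξm
  have harg : c + (b : ℂ) * ξm = (m : ℂ) := by
    rw [hξm]
    field_simp
    ring
  have hgm : g ξm = P m := by
    rw [hg ξm, harg, hΦdef, hP]
    show (m : ℂ) • E₁ + h₀ (m : ℂ) • E₂ = (m : ℂ) • E₁
    rw [hh₀def]
    show (m : ℂ) • E₁ + (Complex.sin ((Real.pi : ℂ) * m) * G m) • E₂ = (m : ℂ) • E₁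
    rw [hsin0 m]
    simp
  set D : ℂ := (Real.pi : ℂ) * Complex.cos ((Real.pi : ℂ) * m) * G m with hD
  have hdm : deriv g ξm = (b : ℂ) • E₁ + (D * (b : ℂ)) • E₂ := by
    rw [hderiv ξm, harg, hh₀der m]
  obtain ⟨rG, hGm, htm⟩ := hGval m hm2
  have htmnn : 0 ≤ t m := by
    rw [ht]
    have := hA0 m
    have := (hBpos m).le
    positivity
  have hrGnn : 0 ≤ rG := le_trans htmnn htm
  have hDnorm : ‖D‖ = Real.pi * rG := by
    rw [hD, hGm]
    rw [norm_mul, norm_mul, hcos1 m, Complex.norm_real, Complex.norm_real,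
      Real.norm_eq_abs, Real.norm_eq_abs, abs_of_nonneg Real.pi_pos.le, abs_of_nonneg hrGnn]
    ring
  -- length estimates
  have hlen1 : E.len (P m) ((D * (b : ℂ)) • E₂) ≤
      E.len (P m) (deriv g ξm) + E.len (P m) (((-b : ℝ) : ℂ) • E₁) := by
    have hdecomp : (D * (b : ℂ)) • E₂ = deriv g ξm + ((-b : ℝ) : ℂ) • E₁ := by
      rw [hdm]
      push_cast
      module
    rw [hdecomp]
    exact E.len_add_le _ _ _
  have hlen2 : E.len (P m) ((D * (b : ℂ)) • E₂) = ‖D‖ * b * B m := by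
    rw [E.len_smul]
    have hBm : E.len (P m) E₂ = B m := rfl
    rw [hBm, norm_mul, Complex.norm_real, Real.norm_eq_abs, abs_of_nonneg hb0]
  have hlen3 : E.len (P m) (((-b : ℝ) : ℂ) • E₁) = b * A m := by
    rw [E.len_smul]
    have hAm : E.len (P m) E₁ = A m := rfl
    rw [hAm, Complex.norm_real, Real.norm_eq_abs, abs_neg, abs_of_nonneg hb0]
  have hCm : E.len (P m) (deriv g ξm) ≤ C := by
    have := hC ξm
    rwa [hgm] at this
  have hDlow : ((m : ℝ) + A m) / B m ≤ ‖D‖ := by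
    rw [hDnorm]
    have h2 : ((m : ℝ) + A m) / B m = Real.pi * t m := by
      show ((m : ℝ) + A m) / B m = Real.pi * ((((m : ℝ) + A m) / B m) / Real.pi)
      rw [mul_comm, div_mul_cancel₀ _ Real.pi_ne_zero]
    rw [h2]
    exact mul_le_mul_of_nonneg_left htm Real.pi_pos.le
  -- combine
  have h1 : ‖D‖ * b * B m ≤ C + b * A m := by
    calc ‖D‖ * b * B m = E.len (P m) ((D * (b : ℂ)) • E₂) := hlen2.symm
      _ ≤ E.len (P m) (deriv g ξm) + E.len (P m) (((-b : ℝ) : ℂ) • E₁) := hlen1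
      _ ≤ C + b * A m := by rw [hlen3]; exact add_le_add_left hCm _
  have h2 : (((m : ℝ) + A m) / B m) * b * B m ≤ ‖D‖ * b * B m := by
    have hB' := (hBpos m).le
    gcongr
  have h3 : (((m : ℝ) + A m) / B m) * b * B m = b * m + b * A m := by
    rw [div_mul_eq_mul_div, div_mul_eq_mul_div, div_eq_iff (hBpos m).ne']
    ring
  have hfinal : b * m ≤ C := by
    rw [h3] at h2
    linarith [h2.trans h1]
  linarith
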